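/- In the setting of the context, for every real λ with 0 < λ < 1/K₋ the following hold: (i) for every a ∈ ℓ^q the series Σ_{k=0}^∞ λ^k·a(k)/μ(k) converges absolutely; (ii) T − λ·I is bounded below: there exists c > 0 with c·‖a‖ ≤ ‖T a − λ·a‖ for all a ∈ ℓ^q; and (iii) the range of the map a ↦ T a − λ·a is exactly the closed hyperplane {a ∈ ℓ^q : Σ_{k=0}^∞ λ^k·a(k)/μ(k) = 0}. -/

import Mathlib

open Filter

section Aux

/-- Evaluation at a coordinate, as a continuous linear map on `lp`. -/
noncomputable def stmt11evalCLM (p : ENNReal) [hfp : Fact (1 ≤ p)] (k : ℕ) :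
    lp (fun _ : ℕ => ℝ) p →L[ℝ] ℝ :=
  LinearMap.mkContinuous
    { toFun := fun f => (f : ∀ _ : ℕ, ℝ) k
      map_add' := fun f g => by simp [lp.coeFn_add]
      map_smul' := fun c f => by simp [lp.coeFn_smul] }
    1 (fun f => by
      have hp : p ≠ 0 := (lt_of_lt_of_le zero_lt_one hfp.out).ne'
      show ‖(f : ∀ _ : ℕ, ℝ) k‖ ≤ 1 * ‖f‖
      simpa using lp.norm_apply_le_norm hp f k)

@[simp] lemma stmt11evalCLM_apply (p : ENNReal) [Fact (1 ≤ p)] (k : ℕ)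
    (f : lp (fun _ : ℕ => ℝ) p) : stmt11evalCLM p k f = (f : ∀ _ : ℕ, ℝ) k := rfl

end Aux

set_option maxHeartbeats 1000000 in
theorem stmt11 (q : ℝ) (hq : 1 ≤ q) [Fact (1 ≤ ENNReal.ofReal q)]
    (μ : ℕ → ℝ) (hμ : ∀ k, 0 < μ k)
    (M : ℝ) (hM : 1 ≤ M)
    (hM1 : ∀ k, μ k ≤ M * μ (k + 1)) (hM2 : ∀ k, μ (k + 1) ≤ M * μ k)
    (T : lp (fun _ : ℕ => ℝ) (ENNReal.ofReal q) →L[ℝ] lp (fun _ : ℕ => ℝ) (ENNReal.ofReal q))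
    (hT0 : ∀ a, (T a : ∀ _ : ℕ, ℝ) 0 = 0)
    (hTk : ∀ a (k : ℕ), (T a : ∀ _ : ℕ, ℝ) (k + 1) = (μ (k + 1) / μ k) * (a : ∀ _ : ℕ, ℝ) k)
    (hbddR : ∀ n : ℕ, BddAbove (Set.range fun k => μ (k + n) / μ k))
    (hbddL : ∀ n : ℕ, BddAbove (Set.range fun k => μ k / μ (k + n)))
    (Kp Km : ℝ) (hKp : 0 < Kp) (hKm : 0 < Km)
    (hKplim : Tendsto (fun n : ℕ => (⨆ k : ℕ, μ (k + n) / μ k) ^ (1 / (n : ℝ))) atTop (nhds Kp))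
    (hKmlim : Tendsto (fun n : ℕ => (⨆ k : ℕ, μ k / μ (k + n)) ^ (1 / (n : ℝ))) atTop (nhds Km))
    (lam : ℝ) (hlam0 : 0 < lam) (hlam : lam < 1 / Km) :
    (∀ a : lp (fun _ : ℕ => ℝ) (ENNReal.ofReal q),
        Summable (fun k : ℕ => |lam ^ k * (a : ∀ _ : ℕ, ℝ) k / μ k|)) ∧
    (∃ c : ℝ, 0 < c ∧ ∀ a, c * ‖a‖ ≤ ‖T a - lam • a‖) ∧
    (Set.range (fun a : lp (fun _ : ℕ => ℝ) (ENNReal.ofReal q) => T a - lam • a) =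
      {a : lp (fun _ : ℕ => ℝ) (ENNReal.ofReal q) |
        ∑' k : ℕ, lam ^ k * (a : ∀ _ : ℕ, ℝ) k / μ k = 0}) := by
  classical
  have hq0 : (0:ℝ) < q := lt_of_lt_of_le one_pos hq
  set p : ENNReal := ENNReal.ofReal q with hpdef
  have hp0 : p ≠ 0 := by
    simp only [hpdef, ne_eq, ENNReal.ofReal_eq_zero, not_le]
    exact hq0
  have hpq : p.toReal = q := by rw [hpdef, ENNReal.toReal_ofReal hq0.le]
  have hqt : 0 < p.toReal := by rw [hpq]; exact hq0
  set L : ℕ → ℝ := fun n => ⨆ k, μ k / μ (k + n) with hLdef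
  have hLle : ∀ n k, μ k / μ (k + n) ≤ L n := fun n k => le_ciSup (hbddL n) k
  have hLpos : ∀ n, 0 < L n :=
    fun n => lt_of_lt_of_le (div_pos (hμ 0) (hμ (0 + n))) (hLle n 0)
  have hμL : ∀ n k, μ k ≤ L n * μ (k + n) := fun n k => (div_le_iff₀ (hμ _)).mp (hLle n k)
  have hKm' : Tendsto (fun n : ℕ => L n ^ (1 / (n : ℝ))) atTop (nhds Km) := hKmlim
  -- a geometric bound
  have hlamKm : lam * Km < 1 := (lt_div_iff₀ hKm).mp hlam
  set r : ℝ := (lam * Km + 1) / 2 with hrdef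
  have hr0 : 0 < r := by
    have : 0 < lam * Km := mul_pos hlam0 hKm
    rw [hrdef]; linarith
  have hr1 : r < 1 := by rw [hrdef]; linarith
  have hKmr : Km < r / lam := by
    rw [lt_div_iff₀ hlam0, hrdef]
    have : Km * lam = lam * Km := mul_comm _ _
    linarith
  have hDbd : ∀ᶠ n : ℕ in atTop, lam ^ n * L n ≤ r ^ n := by
    filter_upwards [hKm'.eventually_lt_const hKmr, eventually_ge_atTop 1] with n h1 hn1
    have hn0 : (n : ℝ) ≠ 0 := Nat.cast_ne_zero.mpr (by omega)
    have hLn : L n = (L n ^ (1 / (n : ℝ))) ^ n := by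
      rw [← Real.rpow_natCast (L n ^ (1 / (n:ℝ))) n, ← Real.rpow_mul (hLpos n).le,
        one_div, inv_mul_cancel₀ hn0, Real.rpow_one]
    have hx0 : (0:ℝ) ≤ lam * L n ^ (1 / (n:ℝ)) :=
      mul_nonneg hlam0.le (Real.rpow_nonneg (hLpos n).le _)
    have hxr : lam * L n ^ (1 / (n:ℝ)) ≤ r := ((lt_div_iff₀' hlam0).mp h1).le
    calc lam ^ n * L n = (lam * L n ^ (1/(n:ℝ))) ^ n := by
          conv_lhs => rw [hLn]
          rw [← mul_pow]
      _ ≤ r ^ n := pow_le_pow_left₀ hx0 hxr n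
  have hD : Summable (fun n => lam ^ n * L n) := by
    obtain ⟨N, hN⟩ := eventually_atTop.mp hDbd
    rw [← summable_nat_add_iff N]
    refine Summable.of_nonneg_of_le
      (fun n => mul_nonneg (pow_nonneg hlam0.le _) (hLpos _).le)
      (fun n => hN (n + N) (Nat.le_add_left N n)) ?_
    exact (summable_nat_add_iff N).mpr (summable_geometric_of_lt_one hr0.le hr1)
  have hE : Summable (fun i => lam ^ i * L (i + 1)) := by
    have h1 := ((summable_nat_add_iff 1).mpr hD).mul_left lam⁻¹
    refine h1.congr fun i => ?_
    rw [pow_succ]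
    field_simp
  have hEnn : ∀ i, 0 ≤ lam ^ i * L (i + 1) :=
    fun i => mul_nonneg (pow_nonneg hlam0.le _) (hLpos _).le
  -- part (i)
  have habs : ∀ a : lp (fun _ : ℕ => ℝ) p, ∀ k : ℕ,
      |lam ^ k * (a : ∀ _ : ℕ, ℝ) k / μ k| ≤ ‖a‖ / μ 0 * (lam ^ k * L k) := by
    intro a k
    have hak : |(a : ∀ _ : ℕ, ℝ) k| ≤ ‖a‖ := by
      simpa only [Real.norm_eq_abs] using lp.norm_apply_le_norm hp0 a k
    have h2 : μ 0 ≤ L k * μ k := by simpa using hμL k 0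
    rw [abs_div, abs_mul, abs_pow, abs_of_pos hlam0, abs_of_pos (hμ k), div_le_iff₀ (hμ k)]
    have h3 : lam ^ k * |(a : ∀ _ : ℕ, ℝ) k| ≤ lam ^ k * ‖a‖ :=
      mul_le_mul_of_nonneg_left hak (pow_nonneg hlam0.le k)
    have h4 : ‖a‖ / μ 0 * (lam ^ k * L k) * μ k = lam ^ k * ‖a‖ * (L k * μ k) / μ 0 := by
      ring
    rw [h4, le_div_iff₀ (hμ 0)]
    calc lam ^ k * |(a : ∀ _ : ℕ, ℝ) k| * μ 0
        ≤ lam ^ k * ‖a‖ * (L k * μ k) := by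
          apply mul_le_mul h3 h2 (hμ 0).le
          exact mul_nonneg (pow_nonneg hlam0.le k) (norm_nonneg a)
      _ = lam ^ k * ‖a‖ * (L k * μ k) := rfl
  have hsummA : ∀ a : lp (fun _ : ℕ => ℝ) p,
      Summable (fun k : ℕ => |lam ^ k * (a : ∀ _ : ℕ, ℝ) k / μ k|) := fun a =>
    Summable.of_nonneg_of_le (fun k => abs_nonneg _) (habs a) (hD.mul_left _)
  have hsumm : ∀ a : lp (fun _ : ℕ => ℝ) p,
      Summable (fun k : ℕ => lam ^ k * (a : ∀ _ : ℕ, ℝ) k / μ k) := fun a =>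
    Summable.of_norm (by simpa only [Real.norm_eq_abs] using hsummA a)
  -- termwise bounds for the solution series
  have hterm : ∀ (b : lp (fun _ : ℕ => ℝ) p) (j i : ℕ),
      |lam ^ i * (μ j / μ (j + i + 1)) * (b : ∀ _ : ℕ, ℝ) (j + i + 1)| ≤
        lam ^ i * L (i + 1) * |(b : ∀ _ : ℕ, ℝ) (j + i + 1)| := by
    intro b j i
    have hdiv : μ j / μ (j + i + 1) ≤ L (i + 1) := by
      have := hLle (i + 1) j
      rwa [← Nat.add_assoc] at this
    have hdiv0 : 0 ≤ μ j / μ (j + i + 1) := le_of_lt (div_pos (hμ _) (hμ _))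
    rw [abs_mul, abs_mul, abs_pow, abs_of_pos hlam0, abs_of_nonneg hdiv0]
    exact mul_le_mul_of_nonneg_right
      (mul_le_mul_of_nonneg_left hdiv (pow_nonneg hlam0.le i)) (abs_nonneg _)
  have htermb : ∀ (b : lp (fun _ : ℕ => ℝ) p) (j i : ℕ),
      |lam ^ i * (μ j / μ (j + i + 1)) * (b : ∀ _ : ℕ, ℝ) (j + i + 1)| ≤
        lam ^ i * L (i + 1) * ‖b‖ := by
    intro b j i
    refine (hterm b j i).trans ?_
    refine mul_le_mul_of_nonneg_left ?_ (hEnn i)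
    simpa only [Real.norm_eq_abs] using lp.norm_apply_le_norm hp0 b (j + i + 1)
  have hser : ∀ (b : lp (fun _ : ℕ => ℝ) p) (j : ℕ),
      Summable (fun i => lam ^ i * (μ j / μ (j + i + 1)) * (b : ∀ _ : ℕ, ℝ) (j + i + 1)) := by
    intro b j
    apply Summable.of_norm
    exact Summable.of_nonneg_of_le (fun i => norm_nonneg _)
      (fun i => by simpa only [Real.norm_eq_abs] using htermb b j i) (hE.mul_right ‖b‖)
  -- the building blocks of the solution operator
  have hy_mem : ∀ (b : lp (fun _ : ℕ => ℝ) p) (i : ℕ),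
      Memℓp (fun k => lam ^ i * (μ k / μ (k + i + 1)) * (b : ∀ _ : ℕ, ℝ) (k + i + 1)) p := by
    intro b i
    apply memℓp_gen
    have hbs : Summable (fun k => ‖(b : ∀ _ : ℕ, ℝ) k‖ ^ p.toReal) := (lp.memℓp b).summable hqt
    have hbs' : Summable (fun k => ‖(b : ∀ _ : ℕ, ℝ) (k + i + 1)‖ ^ p.toReal) := by
      have := (summable_nat_add_iff (i + 1)).mpr hbs
      refine this.congr fun k => ?_
      rw [← Nat.add_assoc]
    refine Summable.of_nonneg_of_le (fun k => Real.rpow_nonneg (norm_nonneg _) _)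
      (fun k => ?_) (hbs'.mul_left ((lam ^ i * L (i + 1)) ^ p.toReal))
    calc ‖lam ^ i * (μ k / μ (k + i + 1)) * (b : ∀ _ : ℕ, ℝ) (k + i + 1)‖ ^ p.toReal
        ≤ (lam ^ i * L (i + 1) * ‖(b : ∀ _ : ℕ, ℝ) (k + i + 1)‖) ^ p.toReal := by
          apply Real.rpow_le_rpow (norm_nonneg _) _ hqt.le
          simpa only [Real.norm_eq_abs] using hterm b k i
      _ = (lam ^ i * L (i + 1)) ^ p.toReal * ‖(b : ∀ _ : ℕ, ℝ) (k + i + 1)‖ ^ p.toReal := by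
          rw [Real.mul_rpow (hEnn i) (norm_nonneg _)]
  let y : lp (fun _ : ℕ => ℝ) p → ℕ → lp (fun _ : ℕ => ℝ) p := fun b i => ⟨_, hy_mem b i⟩
  have hy_apply : ∀ b i k, ((y b i : lp (fun _ : ℕ => ℝ) p) : ∀ _ : ℕ, ℝ) k =
      lam ^ i * (μ k / μ (k + i + 1)) * (b : ∀ _ : ℕ, ℝ) (k + i + 1) := fun b i k => rfl
  have hy_norm : ∀ b i, ‖y b i‖ ≤ lam ^ i * L (i + 1) * ‖b‖ := by
    intro b i
    have hC : 0 ≤ lam ^ i * L (i + 1) := hEnn i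
    have hCb : 0 ≤ lam ^ i * L (i + 1) * ‖b‖ := mul_nonneg hC (norm_nonneg _)
    have hsum1 : Summable (fun k => ‖((y b i : lp (fun _ : ℕ => ℝ) p) : ∀ _ : ℕ, ℝ) k‖ ^ p.toReal) :=
      (lp.memℓp (y b i)).summable hqt
    have hbs : Summable (fun k => ‖(b : ∀ _ : ℕ, ℝ) k‖ ^ p.toReal) := (lp.memℓp b).summable hqt
    have hbs' : Summable (fun k => ‖(b : ∀ _ : ℕ, ℝ) (k + i + 1)‖ ^ p.toReal) := by
      have := (summable_nat_add_iff (i + 1)).mpr hbs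
      refine this.congr fun k => ?_
      rw [← Nat.add_assoc]
    have step1 : (∑' k, ‖((y b i : lp (fun _ : ℕ => ℝ) p) : ∀ _ : ℕ, ℝ) k‖ ^ p.toReal) ≤
        (lam ^ i * L (i + 1)) ^ p.toReal * ∑' k, ‖(b : ∀ _ : ℕ, ℝ) (k + i + 1)‖ ^ p.toReal := by
      rw [← tsum_mul_left]
      refine Summable.tsum_le_tsum (fun k => ?_) hsum1 (hbs'.mul_left _)
      rw [hy_apply b i k]
      calc ‖lam ^ i * (μ k / μ (k + i + 1)) * (b : ∀ _ : ℕ, ℝ) (k + i + 1)‖ ^ p.toReal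
          ≤ (lam ^ i * L (i + 1) * ‖(b : ∀ _ : ℕ, ℝ) (k + i + 1)‖) ^ p.toReal := by
            apply Real.rpow_le_rpow (norm_nonneg _) _ hqt.le
            simpa only [Real.norm_eq_abs] using hterm b k i
        _ = (lam ^ i * L (i + 1)) ^ p.toReal * ‖(b : ∀ _ : ℕ, ℝ) (k + i + 1)‖ ^ p.toReal := by
            rw [Real.mul_rpow hC (norm_nonneg _)]
    have step2 : (∑' k, ‖(b : ∀ _ : ℕ, ℝ) (k + i + 1)‖ ^ p.toReal) ≤
        ∑' k, ‖(b : ∀ _ : ℕ, ℝ) k‖ ^ p.toReal := by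
      refine Summable.tsum_le_tsum_of_inj (fun k => k + i + 1) (fun a b h => by simpa using h)
        (fun c _ => Real.rpow_nonneg (norm_nonneg _) _) (fun k => le_refl _) hbs' hbs
    have step3 : (∑' k, ‖((y b i : lp (fun _ : ℕ => ℝ) p) : ∀ _ : ℕ, ℝ) k‖ ^ p.toReal) ≤
        (lam ^ i * L (i + 1) * ‖b‖) ^ p.toReal := by
      rw [Real.mul_rpow hC (norm_nonneg _)]
      refine step1.trans ?_
      rw [lp.norm_rpow_eq_tsum hqt b]
      exact mul_le_mul_of_nonneg_left step2 (Real.rpow_nonneg hC _)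
    rw [lp.norm_eq_tsum_rpow hqt]
    calc (∑' k, ‖((y b i : lp (fun _ : ℕ => ℝ) p) : ∀ _ : ℕ, ℝ) k‖ ^ p.toReal) ^ (1 / p.toReal)
        ≤ ((lam ^ i * L (i + 1) * ‖b‖) ^ p.toReal) ^ (1 / p.toReal) := by
          apply Real.rpow_le_rpow _ step3 (by positivity)
          exact tsum_nonneg fun k => Real.rpow_nonneg (norm_nonneg _) _
      _ = lam ^ i * L (i + 1) * ‖b‖ := by
          rw [← Real.rpow_mul hCb, mul_one_div, div_self hqt.ne', Real.rpow_one]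
  have hysum : ∀ b, Summable (fun i => y b i) := by
    intro b
    apply Summable.of_norm
    exact Summable.of_nonneg_of_le (fun i => norm_nonneg _) (hy_norm b) (hE.mul_right ‖b‖)
  let A : lp (fun _ : ℕ => ℝ) p → lp (fun _ : ℕ => ℝ) p := fun b => ∑' i, y b i
  have hA_norm : ∀ b, ‖A b‖ ≤ (∑' i, lam ^ i * L (i + 1)) * ‖b‖ := by
    intro b
    have h1 : Summable fun i => ‖y b i‖ :=
      Summable.of_nonneg_of_le (fun i => norm_nonneg _) (hy_norm b) (hE.mul_right ‖b‖)
    calc ‖A b‖ ≤ ∑' i, ‖y b i‖ := norm_tsum_le_tsum_norm h1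
      _ ≤ ∑' i, lam ^ i * L (i + 1) * ‖b‖ := Summable.tsum_le_tsum (hy_norm b) h1 (hE.mul_right ‖b‖)
      _ = (∑' i, lam ^ i * L (i + 1)) * ‖b‖ := tsum_mul_right
  have hA_apply : ∀ b k, ((A b : lp (fun _ : ℕ => ℝ) p) : ∀ _ : ℕ, ℝ) k =
      ∑' i, lam ^ i * (μ k / μ (k + i + 1)) * (b : ∀ _ : ℕ, ℝ) (k + i + 1) := by
    intro b k
    have h := (stmt11evalCLM p k).map_tsum (hysum b)
    simpa [stmt11evalCLM_apply, hy_apply] using h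
  -- entries of T a - lam • a
  have hTentry : ∀ (a : lp (fun _ : ℕ => ℝ) p) (k : ℕ),
      ((T a - lam • a : lp (fun _ : ℕ => ℝ) p) : ∀ _ : ℕ, ℝ) k =
        (T a : ∀ _ : ℕ, ℝ) k - lam * (a : ∀ _ : ℕ, ℝ) k := by
    intro a k
    rw [lp.coeFn_sub, Pi.sub_apply, lp.coeFn_smul, Pi.smul_apply, smul_eq_mul]
  -- the functional vanishes on the range
  have hforward : ∀ a : lp (fun _ : ℕ => ℝ) p,
      ∑' k, lam ^ k * ((T a - lam • a : lp (fun _ : ℕ => ℝ) p) : ∀ _ : ℕ, ℝ) k / μ k = 0 := by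
    intro a
    set c : lp (fun _ : ℕ => ℝ) p := T a - lam • a with hc
    set d : ℕ → ℝ := fun k => lam ^ (k + 1) * (a : ∀ _ : ℕ, ℝ) k / μ k with hd
    have hdsum : Summable d := by
      have := (hsumm a).mul_left lam
      refine this.congr fun k => ?_
      simp only [hd]
      rw [pow_succ]
      ring
    have hcsum : Summable (fun k => lam ^ k * (c : ∀ _ : ℕ, ℝ) k / μ k) := hsumm c
    have hf0 : lam ^ 0 * (c : ∀ _ : ℕ, ℝ) 0 / μ 0 = -d 0 := by
      rw [hTentry a 0, hT0 a]
      simp only [hd, pow_zero, pow_one, one_mul]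
      ring
    have hfk : ∀ k : ℕ, lam ^ (k + 1) * (c : ∀ _ : ℕ, ℝ) (k + 1) / μ (k + 1) = d k - d (k + 1) := by
      intro k
      rw [hTentry a (k + 1), hTk a k]
      simp only [hd]
      have h1 : μ k ≠ 0 := (hμ k).ne'
      have h2 : μ (k + 1) ≠ 0 := (hμ (k + 1)).ne'
      field_simp
      ring
    rw [Summable.tsum_eq_zero_add hcsum, hf0]
    have h1 : ∑' k : ℕ, lam ^ (k + 1) * (c : ∀ _ : ℕ, ℝ) (k + 1) / μ (k + 1) =
        ∑' k : ℕ, (d k - d (k + 1)) := tsum_congr fun k => hfk k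
    rw [h1, Summable.tsum_sub hdsum ((summable_nat_add_iff 1).mpr hdsum)]
    have h3 := Summable.tsum_eq_zero_add hdsum
    linarith
  -- the solution property
  have hinv : ∀ b : lp (fun _ : ℕ => ℝ) p,
      (∑' k, lam ^ k * (b : ∀ _ : ℕ, ℝ) k / μ k) = 0 → T (A b) - lam • A b = b := by
    intro b hb
    apply lp.ext
    funext k
    rw [hTentry (A b) k]
    cases k with
    | zero =>
      rw [hT0 (A b), hA_apply b 0]
      have e1 : ∑' i : ℕ, lam ^ i * (μ 0 / μ (0 + i + 1)) * (b : ∀ _ : ℕ, ℝ) (0 + i + 1) =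
          μ 0 * ∑' i : ℕ, lam ^ i * (b : ∀ _ : ℕ, ℝ) (i + 1) / μ (i + 1) := by
        rw [← tsum_mul_left]
        refine tsum_congr fun i => ?_
        rw [Nat.zero_add]
        have h2 : μ (i + 1) ≠ 0 := (hμ (i + 1)).ne'
        field_simp
      have e3 := Summable.tsum_eq_zero_add (hsumm b)
      rw [hb] at e3
      have e4 : ∑' k : ℕ, lam ^ (k + 1) * (b : ∀ _ : ℕ, ℝ) (k + 1) / μ (k + 1) =
          lam * ∑' i : ℕ, lam ^ i * (b : ∀ _ : ℕ, ℝ) (i + 1) / μ (i + 1) := by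
        rw [← tsum_mul_left]
        refine tsum_congr fun i => ?_
        rw [pow_succ]
        ring
      rw [e4] at e3
      rw [e1]
      have hμ0 : μ 0 ≠ 0 := (hμ 0).ne'
      have e5 : lam * ∑' i : ℕ, lam ^ i * (b : ∀ _ : ℕ, ℝ) (i + 1) / μ (i + 1) =
          -(lam ^ 0 * (b : ∀ _ : ℕ, ℝ) 0 / μ 0) := by linarith
      calc (0:ℝ) - lam * (μ 0 * ∑' i : ℕ, lam ^ i * (b : ∀ _ : ℕ, ℝ) (i + 1) / μ (i + 1))
          = -μ 0 * (lam * ∑' i : ℕ, lam ^ i * (b : ∀ _ : ℕ, ℝ) (i + 1) / μ (i + 1)) := by ring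
        _ = -μ 0 * -(lam ^ 0 * (b : ∀ _ : ℕ, ℝ) 0 / μ 0) := by rw [e5]
        _ = (b : ∀ _ : ℕ, ℝ) 0 := by
            rw [pow_zero]
            field_simp
    | succ k =>
      rw [hTk (A b) k, hA_apply b k, hA_apply b (k + 1)]
      have hμk : μ k ≠ 0 := (hμ k).ne'
      have e1 : μ (k + 1) / μ k *
          ∑' i : ℕ, lam ^ i * (μ k / μ (k + i + 1)) * (b : ∀ _ : ℕ, ℝ) (k + i + 1) =
          ∑' i : ℕ, lam ^ i * (μ (k + 1) / μ (k + i + 1)) * (b : ∀ _ : ℕ, ℝ) (k + i + 1) := by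
        rw [← tsum_mul_left]
        refine tsum_congr fun i => ?_
        have h1 : μ k ≠ 0 := (hμ k).ne'
        have h2 : μ (k + i + 1) ≠ 0 := (hμ (k + i + 1)).ne'
        field_simp
      have hh : Summable (fun i =>
          lam ^ i * (μ (k + 1) / μ (k + i + 1)) * (b : ∀ _ : ℕ, ℝ) (k + i + 1)) := by
        have := (hser b k).mul_left (μ (k + 1) / μ k)
        refine this.congr fun i => ?_
        have h1 : μ k ≠ 0 := (hμ k).ne'
        have h2 : μ (k + i + 1) ≠ 0 := (hμ (k + i + 1)).ne'
        field_simp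
      have e2 := Summable.tsum_eq_zero_add hh
      have e3 : lam ^ 0 * (μ (k + 1) / μ (k + 0 + 1)) * (b : ∀ _ : ℕ, ℝ) (k + 0 + 1) =
          (b : ∀ _ : ℕ, ℝ) (k + 1) := by
        have : k + 0 + 1 = k + 1 := by omega
        rw [this, pow_zero, div_self (hμ (k + 1)).ne']
        ring
      have e4 : ∑' i : ℕ, lam ^ (i + 1) * (μ (k + 1) / μ (k + (i + 1) + 1)) *
            (b : ∀ _ : ℕ, ℝ) (k + (i + 1) + 1) =
          lam * ∑' i : ℕ, lam ^ i * (μ (k + 1) / μ (k + 1 + i + 1)) *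
            (b : ∀ _ : ℕ, ℝ) (k + 1 + i + 1) := by
        rw [← tsum_mul_left]
        refine tsum_congr fun i => ?_
        have h5 : k + (i + 1) + 1 = k + 1 + i + 1 := by omega
        rw [h5, pow_succ]
        ring
      rw [e1, e2, e3, e4]
      ring
  -- injectivity of T - lam
  have hinj : ∀ x : lp (fun _ : ℕ => ℝ) p, T x - lam • x = 0 → x = 0 := by
    intro x hx
    have hx' : ∀ k, (T x : ∀ _ : ℕ, ℝ) k - lam * (x : ∀ _ : ℕ, ℝ) k = 0 := by
      intro k
      have h := congrFun (congrArg (fun f : lp (fun _ : ℕ => ℝ) p => (f : ∀ _ : ℕ, ℝ)) hx) k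
      simp only [lp.coeFn_zero, Pi.zero_apply] at h
      exact (hTentry x k).symm.trans h
    have hz : ∀ k, (x : ∀ _ : ℕ, ℝ) k = 0 := by
      intro k
      induction k with
      | zero =>
        have h0 := hx' 0
        rw [hT0 x] at h0
        have h1 : lam * (x : ∀ _ : ℕ, ℝ) 0 = 0 := by linarith
        exact (mul_eq_zero.mp h1).resolve_left hlam0.ne'
      | succ k ih =>
        have h1 := hx' (k + 1)
        rw [hTk x k, ih, mul_zero, zero_sub, neg_eq_zero] at h1
        exact (mul_eq_zero.mp h1).resolve_left hlam0.ne'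
    apply lp.ext
    funext k
    rw [lp.coeFn_zero, Pi.zero_apply]
    exact hz k
  -- assemble
  have hCE : 0 < ∑' i, lam ^ i * L (i + 1) := by
    refine Summable.tsum_pos hE hEnn 0 ?_
    simpa using hLpos 1
  refine ⟨hsummA, ⟨(∑' i, lam ^ i * L (i + 1))⁻¹, inv_pos.mpr hCE, ?_⟩, ?_⟩
  · intro a
    have hb0 := hforward a
    have heq := hinv (T a - lam • a) hb0
    have hAa : A (T a - lam • a) = a := by
      have hdiff : T (A (T a - lam • a) - a) - lam • (A (T a - lam • a) - a) = 0 := by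
        rw [map_sub, smul_sub]
        have hre : T (A (T a - lam • a)) - T a - (lam • A (T a - lam • a) - lam • a) =
            (T (A (T a - lam • a)) - lam • A (T a - lam • a)) - (T a - lam • a) := by abel
        rw [hre, heq, sub_self]
      exact sub_eq_zero.mp (hinj _ hdiff)
    have h3 : ‖a‖ ≤ (∑' i, lam ^ i * L (i + 1)) * ‖T a - lam • a‖ := by
      conv_lhs => rw [← hAa]
      exact hA_norm _
    rw [inv_mul_le_iff₀ hCE]
    exact h3
  · ext b
    simp only [Set.mem_range, Set.mem_setOf_eq]
    constructor
    · rintro ⟨a, rfl⟩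
      exact hforward a
    · intro hb
      exact ⟨A b, hinv b hb⟩
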